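/- The three functions E_sp, Ẽ_sph, L_yz on the tangent bundle of ℝ³ (with coordinates (x,y,z,ẋ,ẏ,ż)) are functionally independent at every point where the 3×3 matrix with rows (ẋ/(1+a²), ẏ, ż), (ν_x ẋ − xyẏ − xzż, ν_y ẏ − xyẋ − yzż, ν_z ż − xzẋ − yzẏ), (0, −z, y) is invertible, where ν_x = y²+z²+1, ν_y = x²+z²+1, ν_z = x²+y²+1. In particular this matrix has rank 3 on an open dense set. -/

import Mathlib

open Matrix

/-- The spatial energy `E_sp` in the chart `(x,y,z,ẋ,ẏ,ż)` of `Tℝ³`. -/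
noncomputable def Esp (a m₁ m₂ f : ℝ) (p : EuclideanSpace ℝ (Fin 6)) : ℝ :=
  (1/2) * ((p 3)^2/(1+a^2) + (p 4)^2 + (p 5)^2)
    - m₁ / Real.sqrt ((p 0 - a)^2/(1+a^2) + (p 1)^2 + (p 2)^2)
    - m₂ / Real.sqrt ((p 0 + a)^2/(1+a^2) + (p 1)^2 + (p 2)^2)
    - f * ((p 0)^2/(1+a^2) + (p 1)^2 + (p 2)^2)

/-- The projected spherical energy `Ẽ_sph` in the chart of `W`. -/
noncomputable def EsphTilde (a mh₁ mh₂ f : ℝ) (p : EuclideanSpace ℝ (Fin 6)) : ℝ :=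
  (1/2) * ((p 3)^2 + (p 4)^2 + (p 5)^2
      + (p 0 * p 4 - p 1 * p 3)^2 + (p 1 * p 5 - p 2 * p 4)^2 + (p 2 * p 3 - p 0 * p 5)^2)
    - f * ((p 0)^2 + (p 1)^2 + (p 2)^2)
    - mh₁ * (1 + a * p 0) / ((p 0 - a)^2 + (1+a^2) * ((p 1)^2 + (p 2)^2))
    - mh₂ * (1 - a * p 0) / ((p 0 + a)^2 + (1+a^2) * ((p 1)^2 + (p 2)^2))

/-- The angular momentum `L_yz`. -/
def Lyz (p : EuclideanSpace ℝ (Fin 6)) : ℝ := p 1 * p 5 - p 2 * p 4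

/-- The triple `(E_sp, Ẽ_sph, L_yz)` as a map `Tℝ³ ≅ ℝ⁶ → ℝ³`. -/
noncomputable def firstIntegrals (a m₁ m₂ f mh₁ mh₂ : ℝ)
    (p : EuclideanSpace ℝ (Fin 6)) : EuclideanSpace ℝ (Fin 3) :=
  (WithLp.equiv 2 (Fin 3 → ℝ)).symm ![Esp a m₁ m₂ f p, EsphTilde a mh₁ mh₂ f p, Lyz p]

/-- The 3×3 submatrix of the Jacobian with respect to the velocities `(ẋ,ẏ,ż)`. -/
noncomputable def subMat (a : ℝ) (p : EuclideanSpace ℝ (Fin 6)) : Matrix (Fin 3) (Fin 3) ℝ :=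
  !![p 3/(1+a^2), p 4, p 5;
     ((p 1)^2 + (p 2)^2 + 1) * p 3 - p 0 * p 1 * p 4 - p 0 * p 2 * p 5,
       ((p 0)^2 + (p 2)^2 + 1) * p 4 - p 0 * p 1 * p 3 - p 1 * p 2 * p 5,
       ((p 0)^2 + (p 1)^2 + 1) * p 5 - p 0 * p 2 * p 3 - p 1 * p 2 * p 4;
     0, -(p 2), p 1]

private theorem HasFDerivAt.sq' {E : Type*} [NormedAddCommGroup E] [NormedSpace ℝ E]
    {f : E → ℝ} {f' : E →L[ℝ] ℝ} {x : E} (h : HasFDerivAt f f' x) :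
    HasFDerivAt (fun y => (f y)^2) ((2 * f x) • f') x := by
  have := (hasDerivAt_pow 2 (f x)).comp_hasFDerivAt x h
  simpa [Function.comp_def] using this

private theorem HasFDerivAt.divc {E : Type*} [NormedAddCommGroup E] [NormedSpace ℝ E]
    {f : E → ℝ} {f' : E →L[ℝ] ℝ} {x : E} (h : HasFDerivAt f f' x) (c : ℝ) :
    HasFDerivAt (fun y => f y / c) (c⁻¹ • f') x := by
  simpa [div_eq_inv_mul] using h.const_mul c⁻¹

private lemma coordD (p : EuclideanSpace ℝ (Fin 6)) (i : Fin 6) :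
    HasFDerivAt (fun q : EuclideanSpace ℝ (Fin 6) => q i)
      (EuclideanSpace.proj (𝕜 := ℝ) i) p :=
  (EuclideanSpace.proj i : EuclideanSpace ℝ (Fin 6) →L[ℝ] ℝ).hasFDerivAt

private lemma esp_hasD (a m₁ m₂ f : ℝ) (p : EuclideanSpace ℝ (Fin 6))
    (hd : 0 < (p 1)^2 + (p 2)^2) :
    ∃ D : EuclideanSpace ℝ (Fin 6) →L[ℝ] ℝ, HasFDerivAt (Esp a m₁ m₂ f) D p ∧
      D (EuclideanSpace.single 3 1) = subMat a p 0 0 ∧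
      D (EuclideanSpace.single 4 1) = subMat a p 0 1 ∧
      D (EuclideanSpace.single 5 1) = subMat a p 0 2 := by
  have hK : (0:ℝ) < 1 + a^2 := by positivity
  have hpos₁ : 0 < (p 0 - a)^2/(1+a^2) + (p 1)^2 + (p 2)^2 := by
    have := div_nonneg (sq_nonneg (p 0 - a)) hK.le
    nlinarith
  have hpos₂ : 0 < (p 0 + a)^2/(1+a^2) + (p 1)^2 + (p 2)^2 := by
    have := div_nonneg (sq_nonneg (p 0 + a)) hK.le
    nlinarith
  have hu₁ := ((((coordD p 0).sub_const a).sq'.divc (1+a^2)).add ((coordD p 1).sq')).add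
      ((coordD p 2).sq')
  have hu₂ := ((((coordD p 0).add_const a).sq'.divc (1+a^2)).add ((coordD p 1).sq')).add
      ((coordD p 2).sq')
  have hs₁ := ((hasDerivAt_const _ m₁).div (Real.hasDerivAt_sqrt hpos₁.ne')
      (Real.sqrt_ne_zero'.mpr hpos₁)).comp_hasFDerivAt p hu₁
  have hs₂ := ((hasDerivAt_const _ m₂).div (Real.hasDerivAt_sqrt hpos₂.ne')
      (Real.sqrt_ne_zero'.mpr hpos₂)).comp_hasFDerivAt p hu₂
  simp only [Function.comp_def] at hs₁ hs₂
  have hA := ((((coordD p 3).sq'.divc (1+a^2)).add ((coordD p 4).sq')).add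
      ((coordD p 5).sq')).const_mul (1/2 : ℝ)
  have hW := ((((coordD p 0).sq'.divc (1+a^2)).add ((coordD p 1).sq')).add
      ((coordD p 2).sq')).const_mul f
  refine ⟨_, ((hA.sub hs₁).sub hs₂).sub hW, ?_, ?_, ?_⟩ <;>
  · simp [ContinuousLinearMap.sub_apply, ContinuousLinearMap.add_apply,
      ContinuousLinearMap.smul_apply, PiLp.proj_apply,
      EuclideanSpace.single_apply, subMat, smul_eq_mul]
    try field_simp
    try ring

set_option maxHeartbeats 2000000 in
private lemma esph_hasD (a mh₁ mh₂ f : ℝ) (p : EuclideanSpace ℝ (Fin 6))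
    (hd : 0 < (p 1)^2 + (p 2)^2) :
    ∃ D : EuclideanSpace ℝ (Fin 6) →L[ℝ] ℝ, HasFDerivAt (EsphTilde a mh₁ mh₂ f) D p ∧
      D (EuclideanSpace.single 3 1) = subMat a p 1 0 ∧
      D (EuclideanSpace.single 4 1) = subMat a p 1 1 ∧
      D (EuclideanSpace.single 5 1) = subMat a p 1 2 := by
  have hK : (0:ℝ) < 1 + a^2 := by positivity
  have hpos₁ : 0 < (p 0 - a)^2 + (1+a^2) * ((p 1)^2 + (p 2)^2) := by nlinarith [sq_nonneg (p 0 - a)]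
  have hpos₂ : 0 < (p 0 + a)^2 + (1+a^2) * ((p 1)^2 + (p 2)^2) := by nlinarith [sq_nonneg (p 0 + a)]
  have hden₁ := (((coordD p 0).sub_const a).sq').add
      ((((coordD p 1).sq').add ((coordD p 2).sq')).const_mul (1+a^2))
  have hden₂ := (((coordD p 0).add_const a).sq').add
      ((((coordD p 1).sq').add ((coordD p 2).sq')).const_mul (1+a^2))
  have hinv₁ := (hasDerivAt_inv hpos₁.ne').comp_hasFDerivAt p hden₁
  have hinv₂ := (hasDerivAt_inv hpos₂.ne').comp_hasFDerivAt p hden₂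
  simp only [Function.comp_def] at hinv₁ hinv₂
  have hnum₁ := (((coordD p 0).const_mul a).const_add 1).const_mul mh₁
  have hnum₂ := ((((coordD p 0).const_mul a).neg).const_add 1).const_mul mh₂
  have hpot₁ := hnum₁.mul hinv₁
  have hpot₂ := hnum₂.mul hinv₂
  simp only [← div_eq_mul_inv] at hpot₁ hpot₂
  have hkin := (((((((coordD p 3).sq').add ((coordD p 4).sq')).add ((coordD p 5).sq')).add
      ((((coordD p 0).mul (coordD p 4)).sub ((coordD p 1).mul (coordD p 3))).sq')).add
      ((((coordD p 1).mul (coordD p 5)).sub ((coordD p 2).mul (coordD p 4))).sq')).add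
      ((((coordD p 2).mul (coordD p 3)).sub ((coordD p 0).mul (coordD p 5))).sq')).const_mul
      (1/2 : ℝ)
  have hf := ((((coordD p 0).sq').add ((coordD p 1).sq')).add ((coordD p 2).sq')).const_mul f
  refine ⟨_, ((hkin.sub hf).sub hpot₁).sub hpot₂, ?_, ?_, ?_⟩ <;>
  · simp [ContinuousLinearMap.sub_apply, ContinuousLinearMap.add_apply,
      ContinuousLinearMap.smul_apply, PiLp.proj_apply,
      EuclideanSpace.single_apply, subMat, smul_eq_mul]
    try field_simp
    try ring

private lemma lyz_hasD (a : ℝ) (p : EuclideanSpace ℝ (Fin 6)) :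
    ∃ D : EuclideanSpace ℝ (Fin 6) →L[ℝ] ℝ, HasFDerivAt Lyz D p ∧
      D (EuclideanSpace.single 3 1) = subMat a p 2 0 ∧
      D (EuclideanSpace.single 4 1) = subMat a p 2 1 ∧
      D (EuclideanSpace.single 5 1) = subMat a p 2 2 := by
  refine ⟨_, ((coordD p 1).mul (coordD p 5)).sub ((coordD p 2).mul (coordD p 4)), ?_, ?_, ?_⟩ <;>
  · simp [ContinuousLinearMap.sub_apply, ContinuousLinearMap.add_apply,
      ContinuousLinearMap.smul_apply, PiLp.proj_apply,
      EuclideanSpace.single_apply, subMat, smul_eq_mul]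
    try ring

set_option maxRecDepth 10000 in
/-- `E_sp`, `Ẽ_sph`, `L_yz` are functionally independent (the derivative of
the triple has rank 3) at every point where the displayed 3×3 velocity submatrix of their
Jacobian is invertible; in particular this matrix has rank 3 on an open dense set. -/
theorem stmt_2 (a m₁ m₂ f mh₁ mh₂ : ℝ)
    (hmh₁ : mh₁ = m₁ * Real.sqrt (1+a^2)) (hmh₂ : mh₂ = m₂ * Real.sqrt (1+a^2)) :
    (∀ p : EuclideanSpace ℝ (Fin 6), IsUnit (subMat a p).det →
      LinearMap.rank ((fderiv ℝ (firstIntegrals a m₁ m₂ f mh₁ mh₂) p) :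
        EuclideanSpace ℝ (Fin 6) →ₗ[ℝ] EuclideanSpace ℝ (Fin 3)) = 3) ∧
    (∃ s : Set (EuclideanSpace ℝ (Fin 6)), IsOpen s ∧ Dense s ∧
      ∀ p ∈ s, (subMat a p).rank = 3) := by
  constructor
  · intro p hdet
    -- nondegeneracy of (p 1, p 2)
    have hd : 0 < (p 1)^2 + (p 2)^2 := by
      rcases eq_or_lt_of_le (by positivity : (0:ℝ) ≤ (p 1)^2 + (p 2)^2) with h | h
      · exfalso
        have h1 : p 1 = 0 := by nlinarith [sq_nonneg (p 1), sq_nonneg (p 2)]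
        have h2 : p 2 = 0 := by nlinarith [sq_nonneg (p 1), sq_nonneg (p 2)]
        have hz : (subMat a p).det = 0 := by
          simp [subMat, Matrix.det_fin_three, h1, h2]
        rw [hz] at hdet
        simpa using hdet
      · exact h
    obtain ⟨D₁, hD₁, e₁₀, e₁₁, e₁₂⟩ := esp_hasD a m₁ m₂ f p hd
    obtain ⟨D₂, hD₂, e₂₀, e₂₁, e₂₂⟩ := esph_hasD a mh₁ mh₂ f p hd
    obtain ⟨D₃, hD₃, e₃₀, e₃₁, e₃₂⟩ := lyz_hasD a p
    have hG : HasFDerivAt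
        (fun q : EuclideanSpace ℝ (Fin 6) =>
          (![Esp a m₁ m₂ f q, EsphTilde a mh₁ mh₂ f q, Lyz q] : Fin 3 → ℝ))
        (ContinuousLinearMap.pi ![D₁, D₂, D₃]) p := by
      refine hasFDerivAt_pi'.2 fun i => ?_
      fin_cases i <;>
        simp only [ContinuousLinearMap.proj_pi, Matrix.cons_val_zero, Matrix.cons_val_one,
          Matrix.head_cons, Fin.mk_one, Fin.mk_zero, Matrix.cons_val_two, Matrix.tail_cons,
          Fin.isValue]
      exacts [hD₁, hD₂, hD₃]
    have hfun : firstIntegrals a m₁ m₂ f mh₁ mh₂ =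
        (⇑(PiLp.continuousLinearEquiv 2 ℝ (fun _ : Fin 3 => ℝ)).symm ∘ fun q : EuclideanSpace ℝ (Fin 6) =>
          (![Esp a m₁ m₂ f q, EsphTilde a mh₁ mh₂ f q, Lyz q] : Fin 3 → ℝ)) := rfl
    have hF : HasFDerivAt (firstIntegrals a m₁ m₂ f mh₁ mh₂)
        (((PiLp.continuousLinearEquiv 2 ℝ (fun _ : Fin 3 => ℝ)).symm : (Fin 3 → ℝ) →L[ℝ] EuclideanSpace ℝ (Fin 3)).comp
          (ContinuousLinearMap.pi ![D₁, D₂, D₃])) p := by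
      rw [hfun]
      exact ((PiLp.continuousLinearEquiv 2 ℝ (fun _ : Fin 3 => ℝ)).symm.hasFDerivAt).comp p hG
    have hfd := hF.fderiv
    rw [hfd]
    -- surjectivity
    have hMinv : subMat a p * (subMat a p)⁻¹ = 1 := Matrix.mul_nonsing_inv _ hdet
    have hsurj : Function.Surjective
        ((((PiLp.continuousLinearEquiv 2 ℝ (fun _ : Fin 3 => ℝ)).symm :
            (Fin 3 → ℝ) →L[ℝ] EuclideanSpace ℝ (Fin 3)).comp
          (ContinuousLinearMap.pi ![D₁, D₂, D₃]) :
            EuclideanSpace ℝ (Fin 6) →ₗ[ℝ] EuclideanSpace ℝ (Fin 3))) := by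
      intro v
      set c : Fin 3 → ℝ := (subMat a p)⁻¹ *ᵥ (fun i => v i) with hcdef
      have hMc : ∀ j, (subMat a p *ᵥ c) j = v j := by
        intro j
        rw [hcdef, Matrix.mulVec_mulVec, hMinv, Matrix.one_mulVec]
      refine ⟨c 0 • EuclideanSpace.single 3 1 + c 1 • EuclideanSpace.single 4 1
        + c 2 • EuclideanSpace.single 5 1, ?_⟩
      refine PiLp.ext fun i => ?_
      rw [← hMc i]
      fin_cases i <;>
        simp only [ContinuousLinearMap.coe_coe, ContinuousLinearMap.comp_apply, map_add,
          _root_.map_smul, ContinuousLinearEquiv.coe_coe,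
          PiLp.coe_symm_continuousLinearEquiv, PiLp.toLp_apply,
          ContinuousLinearMap.pi_apply, PiLp.add_apply, PiLp.smul_apply, smul_eq_mul,
          Matrix.cons_val_zero, Matrix.cons_val_one, Matrix.head_cons, Matrix.cons_val_two,
          Matrix.tail_cons, Fin.zero_eta, Fin.mk_one, Fin.isValue,
          Matrix.mulVec, dotProduct, Fin.sum_univ_three]
      · rw [e₁₀, e₁₁, e₁₂]; ring
      · rw [e₂₀, e₂₁, e₂₂]; ring
      · have h2 : (⟨2, by norm_num⟩ : Fin 3) = 2 := rfl
        rw [h2, Matrix.cons_val_two]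
        simp only [Matrix.tail_cons, Matrix.head_cons]
        rw [e₃₀, e₃₁, e₃₂]; ring
    rw [LinearMap.rank, LinearMap.range_eq_top.2 hsurj, rank_top,
      ← Module.finrank_eq_rank (R := ℝ) (M := EuclideanSpace ℝ (Fin 3)),
      finrank_euclideanSpace]
    simp
  · have hK : (0:ℝ) < 1 + a^2 := by positivity
    have hA : AnalyticOnNhd ℝ (fun q : EuclideanSpace ℝ (Fin 6) => (subMat a q).det)
        Set.univ := by
      intro x _
      have hc : ∀ i : Fin 6, AnalyticAt ℝ (fun q : EuclideanSpace ℝ (Fin 6) => q i) x :=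
        fun i => (EuclideanSpace.proj i : EuclideanSpace ℝ (Fin 6) →L[ℝ] ℝ).analyticAt x
      have e00 : AnalyticAt ℝ (fun q : EuclideanSpace ℝ (Fin 6) => q 3 / (1+a^2)) x :=
        (hc 3).div analyticAt_const (by positivity)
      have e10 : AnalyticAt ℝ (fun q : EuclideanSpace ℝ (Fin 6) =>
          ((q 1)^2 + (q 2)^2 + 1) * q 3 - q 0 * q 1 * q 4 - q 0 * q 2 * q 5) x :=
        (((((hc 1).pow 2).add ((hc 2).pow 2)).add analyticAt_const).mul (hc 3)).sub
          (((hc 0).mul (hc 1)).mul (hc 4)) |>.sub (((hc 0).mul (hc 2)).mul (hc 5))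
      have e11 : AnalyticAt ℝ (fun q : EuclideanSpace ℝ (Fin 6) =>
          ((q 0)^2 + (q 2)^2 + 1) * q 4 - q 0 * q 1 * q 3 - q 1 * q 2 * q 5) x :=
        (((((hc 0).pow 2).add ((hc 2).pow 2)).add analyticAt_const).mul (hc 4)).sub
          (((hc 0).mul (hc 1)).mul (hc 3)) |>.sub (((hc 1).mul (hc 2)).mul (hc 5))
      have e12 : AnalyticAt ℝ (fun q : EuclideanSpace ℝ (Fin 6) =>
          ((q 0)^2 + (q 1)^2 + 1) * q 5 - q 0 * q 2 * q 3 - q 1 * q 2 * q 4) x :=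
        (((((hc 0).pow 2).add ((hc 1).pow 2)).add analyticAt_const).mul (hc 5)).sub
          (((hc 0).mul (hc 2)).mul (hc 3)) |>.sub (((hc 1).mul (hc 2)).mul (hc 4))
      have e21 : AnalyticAt ℝ (fun q : EuclideanSpace ℝ (Fin 6) => -(q 2)) x := (hc 2).neg
      simp only [subMat, Matrix.det_fin_three, Matrix.cons_val', Matrix.cons_val_zero,
        Matrix.cons_val_one, Matrix.head_cons, Matrix.cons_val_two, Matrix.tail_cons,
        Matrix.empty_val', Matrix.cons_val_fin_one, Matrix.of_apply]
      exact ((((((e00.mul e11).mul (hc 1)).sub ((e00.mul e12).mul e21)).sub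
        (((hc 4).mul e10).mul (hc 1))).add (((hc 4).mul e12).mul analyticAt_const)).add
        (((hc 5).mul e10).mul e21)).sub (((hc 5).mul e11).mul analyticAt_const)
    have hq : (subMat a ((WithLp.equiv 2 (Fin 6 → ℝ)).symm ![0,1,0,1,1,0])).det ≠ 0 := by
      simp only [subMat, Matrix.det_fin_three, WithLp.equiv_symm_apply, PiLp.toLp_apply,
        Matrix.cons_val', Matrix.cons_val_zero, Matrix.cons_val_one, Matrix.head_cons,
        Matrix.cons_val_two, Matrix.tail_cons, Matrix.empty_val', Matrix.cons_val_fin_one,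
        Matrix.of_apply, Matrix.cons_val_three, Matrix.cons_val_four]
      norm_num
      intro h
      field_simp at h
      nlinarith [sq_nonneg a]
    refine ⟨{q | (subMat a q).det ≠ 0}, ?_, ?_, ?_⟩
    · have hcont : Continuous fun q : EuclideanSpace ℝ (Fin 6) => (subMat a q).det := by
        rw [continuous_iff_continuousAt]
        exact fun x => (hA x trivial).continuousAt
      exact isOpen_compl_singleton.preimage hcont
    · rw [show {q : EuclideanSpace ℝ (Fin 6) | (subMat a q).det ≠ 0}
          = {q : EuclideanSpace ℝ (Fin 6) | (subMat a q).det = 0}ᶜ from rfl,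
        ← interior_eq_empty_iff_dense_compl]
      by_contra hne
      obtain ⟨x, hx⟩ := Set.nonempty_iff_ne_empty.mpr hne
      have hev : (fun q : EuclideanSpace ℝ (Fin 6) => (subMat a q).det) =ᶠ[nhds x] 0 := by
        have hmem : {q : EuclideanSpace ℝ (Fin 6) | (subMat a q).det = 0} ∈ nhds x :=
          Filter.mem_of_superset (isOpen_interior.mem_nhds hx) interior_subset
        exact Filter.eventually_of_mem hmem fun y hy => hy
      have h0 := hA.eqOn_zero_of_preconnected_of_eventuallyEq_zero isPreconnected_univ
        (Set.mem_univ x) hev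
      exact hq (h0 (Set.mem_univ _))
    · intro q hq'
      have hu : IsUnit (subMat a q) :=
        (Matrix.isUnit_iff_isUnit_det _).2 (isUnit_iff_ne_zero.2 hq')
      rw [Matrix.rank_of_isUnit _ hu]
      simp
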